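/- Let p be a prime, n ≥ 0 and m ≥ 0 integers. Suppose x_0, x_1, ..., x_{p-1} ∈ ℤ_p[[X]] satisfy X^n · (1+X)^m = Σ_{i=0}^{p-1} (1+X)^i · x_i((1+X)^p - 1). Then for every j ≥ 0, the coefficient of X^j in x_0 equals the sum over all integers k with 0 ≤ k ≤ n and k ≡ -m (mod p) of (-1)^(n-k) · C(n,k) · C((k+m)/p, j) (viewed in ℤ_p). -/

import Mathlib

open PowerSeries

/-- Substitution of a power series `g` with zero constant term into a power series `f`:
the coefficient of `X^d` in `f(g)` is `∑_{n ≤ d} (coeff n f) · (coeff d g^n)`.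
(When the constant term of `g` vanishes, `coeff d (g^n) = 0` for `n > d`, so this is
the usual substitution `f ↦ f(g)`.) -/
noncomputable def PowerSeries.subst' {R : Type*} [CommRing R] (g f : R⟦X⟧) : R⟦X⟧ :=
  PowerSeries.mk fun d => ∑ n ∈ Finset.range (d + 1), coeff n f * coeff d (g ^ n)

section Helpers

variable {R : Type*} [CommRing R]

lemma coeff_one_add_X_pow' (a k : ℕ) :
    coeff k ((1 + X) ^ a) = (a.choose k : R) := by
  rw [← Polynomial.coe_one, ← Polynomial.coe_X, ← Polynomial.coe_add, ← Polynomial.coe_pow,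
    Polynomial.coeff_coe, Polynomial.coeff_one_add_X_pow]

lemma coeff_pow_eq_zero' {g : R⟦X⟧} (hg : constantCoeff g = 0) {d n : ℕ} (h : d < n) :
    coeff d (g ^ n) = 0 := by
  obtain ⟨h', rfl⟩ := X_dvd_iff.mpr hg
  rw [mul_pow, PowerSeries.coeff_X_pow_mul']
  simp [Nat.not_le_of_lt h]

lemma coeff_subst' {g f : R⟦X⟧} (d : ℕ) :
    coeff d (subst' g f) =
      ∑ n ∈ Finset.range (d + 1), coeff n f * coeff d (g ^ n) := by
  simp [subst']

lemma subst'_one_add_X_pow {g : R⟦X⟧} (hg : constantCoeff g = 0) (a : ℕ) :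
    subst' g ((1 + X) ^ a) = (1 + g) ^ a := by
  ext d
  rw [_root_.coeff_subst']
  have hrhs : coeff d ((1 + g) ^ a)
      = ∑ n ∈ Finset.range (a + 1), (a.choose n : R) * coeff d (g ^ n) := by
    rw [add_comm (1 : R⟦X⟧) g, add_pow]
    rw [map_sum]
    refine Finset.sum_congr rfl fun n hn => ?_
    simp only [one_pow, mul_one]
    rw [mul_comm (g ^ n) _, ← nsmul_eq_mul, map_nsmul, nsmul_eq_mul]
  rw [hrhs]
  have h1 : ∀ s : Finset ℕ, Finset.range (d + 1) ⊆ s →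
      ∑ n ∈ Finset.range (d + 1), coeff n ((1+X)^a) * coeff d (g ^ n)
        = ∑ n ∈ s, (a.choose n : R) * coeff d (g ^ n) := by
    intro s hs
    rw [Finset.sum_subset hs]
    · exact Finset.sum_congr rfl fun n _ => by rw [coeff_one_add_X_pow']
    · intro n _ hn
      rw [coeff_pow_eq_zero' hg (by simpa using hn), mul_zero]
  have h2 : Finset.range (a + 1) ⊆ Finset.range (a + d + 2) := by
    apply Finset.range_subset_range.mpr; omega
  rw [h1 (Finset.range (a + d + 2)) (Finset.range_subset_range.mpr (by omega))]
  rw [Finset.sum_subset h2]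
  intro n hn hn'
  rw [Nat.choose_eq_zero_of_lt (by simp at hn'; omega), Nat.cast_zero, zero_mul]

lemma subst'_sum {g : R⟦X⟧} {α : Type*} (s : Finset α) (f : α → R⟦X⟧) :
    subst' g (∑ k ∈ s, f k) = ∑ k ∈ s, subst' g (f k) := by
  ext d
  simp only [_root_.coeff_subst', map_sum, Finset.sum_mul]
  rw [Finset.sum_comm]

lemma subst'_intCast_mul {g f : R⟦X⟧} (z : ℤ) :
    subst' g ((z : R⟦X⟧) * f) = (z : R⟦X⟧) * subst' g f := by
  ext d
  simp only [_root_.coeff_subst', ← zsmul_eq_mul, map_zsmul, Finset.smul_sum, smul_mul_assoc]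

lemma subst'_natCast_mul {g f : R⟦X⟧} (z : ℕ) :
    subst' g ((z : R⟦X⟧) * f) = (z : R⟦X⟧) * subst' g f := by
  ext d
  simp only [_root_.coeff_subst', ← nsmul_eq_mul, map_nsmul, Finset.smul_sum, smul_mul_assoc]

lemma map_subst' {S : Type*} [CommRing S] (φ : R →+* S) (g f : R⟦X⟧) :
    PowerSeries.map φ (subst' g f) = subst' (PowerSeries.map φ g) (PowerSeries.map φ f) := by
  ext d
  simp only [_root_.coeff_subst', coeff_map, map_sum, map_mul, ← map_pow]

lemma coeff_subst'_X_pow {p : ℕ} (hp : 0 < p) (f : R⟦X⟧) (d : ℕ) :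
    coeff d (subst' ((X : R⟦X⟧) ^ p) f) =
      if p ∣ d then coeff (d / p) f else 0 := by
  rw [_root_.coeff_subst']
  simp only [← pow_mul, coeff_X_pow]
  by_cases h : p ∣ d
  · obtain ⟨e, rfl⟩ := h
    have hmem : e ∈ Finset.range (p * e + 1) := by
      simp only [Finset.mem_range]; nlinarith
    rw [Finset.sum_eq_single_of_mem e hmem]
    · rw [if_pos rfl, mul_one, if_pos ⟨e, rfl⟩, Nat.mul_div_cancel_left e hp]
    · intro n _ hn
      rw [if_neg, mul_zero]
      intro hc
      exact hn (Nat.eq_of_mul_eq_mul_left hp hc.symm)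
  · rw [Finset.sum_eq_zero, if_neg h]
    intro n _
    rw [if_neg (fun hc => h ⟨n, hc⟩), mul_zero]

end Helpers

section Triangular

variable {S : Type*} [CommRing S]

lemma coeff_mul_substXp {p : ℕ} (hp1 : 0 < p) (Z : S⟦X⟧) (i : ℕ) (hi : i < p)
    (t : ℕ) (ht : t < p) (e : ℕ) :
    coeff (p * e + t) ((1 + X) ^ i * subst' ((X : S⟦X⟧) ^ p) Z) =
      if t ≤ i then ((i.choose t : S) * coeff e Z) else 0 := by
  rw [PowerSeries.coeff_mul]
  have key : ∀ a b : ℕ, a + b = p * e + t → (a, b) ≠ (t, p * e) →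
      coeff a ((1 + X) ^ i) * coeff b (subst' ((X : S⟦X⟧) ^ p) Z) = 0 := by
    intro a b hab hne
    rw [coeff_one_add_X_pow', coeff_subst'_X_pow hp1]
    by_cases hb : p ∣ b
    · obtain ⟨e', rfl⟩ := hb
      rcases lt_trichotomy e' e with h | h | h
      · have h1 : p * (e' + 1) ≤ p * e := Nat.mul_le_mul_left p (by omega)
        have ha : i < a := by
          have := Nat.mul_succ p e' ▸ h1
          omega
        rw [Nat.choose_eq_zero_of_lt ha, Nat.cast_zero, zero_mul]
      · subst h
        have ha : a = t := by omega
        subst ha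
        exact absurd rfl hne
      · have h2 : p * (e + 1) ≤ p * e' := Nat.mul_le_mul_left p (by omega)
        have : False := by
          have := Nat.mul_succ p e ▸ h2
          omega
        exact this.elim
    · rw [if_neg hb, mul_zero]
  by_cases hti : t ≤ i
  · rw [Finset.sum_eq_single_of_mem (t, p * e)
      (by rw [Finset.HasAntidiagonal.mem_antidiagonal]; ring)]
    · rw [coeff_one_add_X_pow', coeff_subst'_X_pow hp1, if_pos ⟨e, rfl⟩,
        Nat.mul_div_cancel_left e hp1, if_pos hti]
    · intro q hq hne
      exact key q.1 q.2 (Finset.HasAntidiagonal.mem_antidiagonal.mp hq)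
        (by rw [Prod.mk.eta]; exact hne)
  · rw [Finset.sum_eq_zero, if_neg hti]
    intro q hq
    by_cases hc : q = (t, p * e)
    · subst hc
      rw [coeff_one_add_X_pow', Nat.choose_eq_zero_of_lt (by omega), Nat.cast_zero, zero_mul]
    · exact key q.1 q.2 (Finset.HasAntidiagonal.mem_antidiagonal.mp hq)
        (by rw [Prod.mk.eta]; exact hc)

lemma triangular {p : ℕ} (hp1 : 0 < p) (Z : Fin p → S⟦X⟧)
    (h : ∑ i : Fin p, (1 + X) ^ (i : ℕ) * subst' ((X : S⟦X⟧) ^ p) (Z i) = 0) :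
    ∀ i, Z i = 0 := by
  have star : ∀ t, t < p → ∀ e, ∑ i : Fin p,
      (if t ≤ (i : ℕ) then (((i : ℕ).choose t : S) * coeff e (Z i)) else 0) = 0 := by
    intro t ht e
    have h0 := congrArg (coeff (p * e + t)) h
    rw [map_sum, map_zero] at h0
    refine Eq.trans (Finset.sum_congr rfl fun i _ => ?_) h0
    exact (coeff_mul_substXp hp1 (Z i) i i.isLt t ht e).symm
  have main : ∀ q : ℕ, ∀ i : Fin p, p - (i : ℕ) ≤ q → Z i = 0 := by
    intro q
    induction q with
    | zero => intro i hi; exact absurd hi (by have := i.isLt; omega)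
    | succ q ih =>
      intro i hi
      ext e
      have hs := star i i.isLt e
      rw [Finset.sum_eq_single_of_mem i (Finset.mem_univ i)] at hs
      · rw [if_pos le_rfl, Nat.choose_self, Nat.cast_one, one_mul] at hs
        simpa using hs
      · intro i' _ hne
        by_cases hle : (i : ℕ) ≤ (i' : ℕ)
        · have hlt : (i : ℕ) < (i' : ℕ) :=
            lt_of_le_of_ne hle fun hc => hne (Fin.ext hc.symm)
          rw [ih i' (by omega), map_zero, mul_zero, if_pos hle]
        · rw [if_neg hle]
  exact fun i => main p i (by omega)

end Triangular

section PadicInj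

lemma subst'_sub {R : Type*} [CommRing R] (g f f' : R⟦X⟧) :
    subst' g (f - f') = subst' g f - subst' g f' := by
  ext d
  simp only [_root_.coeff_subst', map_sub, sub_mul, Finset.sum_sub_distrib]

lemma charP_powerSeries (R : Type*) [CommRing R] (q : ℕ) [CharP R q] :
    CharP R⟦X⟧ q := by
  constructor
  intro n
  rw [← CharP.cast_eq_zero_iff R q n]
  constructor
  · intro h
    have h2 := congrArg (constantCoeff) h
    simpa using h2
  · intro h
    rw [← map_natCast C n, h, map_zero]

variable {p : ℕ} [hp : Fact p.Prime]

lemma padic_eq_zero_of_forall_pow_dvd (a : ℤ_[p]) (h : ∀ c : ℕ, (p : ℤ_[p]) ^ c ∣ a) :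
    a = 0 := by
  by_contra ha
  have hv := PadicInt.norm_eq_zpow_neg_valuation ha
  have hvn : 0 ≤ a.valuation := Nat.zero_le _
  set c : ℕ := a.valuation + 1 with hc
  have h1 : ‖a‖ ≤ (p : ℝ) ^ (-(c : ℤ)) :=
    (PadicInt.norm_le_pow_iff_mem_span_pow a c).mpr
      (Ideal.mem_span_singleton.mpr (h c))
  rw [hv] at h1
  have hplt : (1 : ℝ) < p := by exact_mod_cast hp.out.one_lt
  have hlt : (-(c : ℤ)) < -a.valuation := by omega
  exact absurd h1 (not_le.mpr (zpow_lt_zpow_right₀ hplt hlt))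

lemma mod_p_dvd (z : Fin p → PowerSeries ℤ_[p])
    (h : ∑ i : Fin p, (1 + X) ^ (i : ℕ) * subst' ((1 + X) ^ p - 1) (z i) = 0) :
    ∀ i d, (p : ℤ_[p]) ∣ coeff d (z i) := by
  haveI : CharP ((ZMod p)⟦X⟧) p := charP_powerSeries _ p
  set φ := PadicInt.toZMod (p := p) with hφ
  have hXp : PowerSeries.map φ ((1 + X) ^ p - 1) = (X : (ZMod p)⟦X⟧) ^ p := by
    rw [map_sub, map_pow, map_add, map_one, PowerSeries.map_X, add_pow_char, one_pow,
      add_sub_cancel_left]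
  have hmap : ∑ i : Fin p, (1 + X) ^ (i : ℕ) *
      subst' ((X : (ZMod p)⟦X⟧) ^ p) (PowerSeries.map φ (z i)) = 0 := by
    have h0 := congrArg (PowerSeries.map φ) h
    rw [map_zero, map_sum] at h0
    refine Eq.trans (Finset.sum_congr rfl fun i _ => ?_) h0
    rw [map_mul, map_pow, map_add, map_one, PowerSeries.map_X, map_subst', hXp]
  intro i d
  have h1 := triangular hp.out.pos _ hmap i
  have h2 : φ (coeff d (z i)) = 0 := by
    have h3 := congrArg (coeff d) h1
    simpa [PowerSeries.coeff_map] using h3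
  have h3 : coeff d (z i) ∈ RingHom.ker φ := h2
  rw [hφ, PadicInt.ker_toZMod, PadicInt.maximalIdeal_eq_span_p,
    Ideal.mem_span_singleton] at h3
  exact h3

lemma pow_dvd_coeff : ∀ (c : ℕ) (z : Fin p → PowerSeries ℤ_[p]),
    (∑ i : Fin p, (1 + X) ^ (i : ℕ) * subst' ((1 + X) ^ p - 1) (z i) = 0) →
    ∀ i d, (p : ℤ_[p]) ^ c ∣ coeff d (z i) := by
  intro c
  induction c with
  | zero => intro z h i d; simpa using one_dvd _
  | succ c ih =>
    intro z h i d
    have hdvd := mod_p_dvd z h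
    set w : Fin p → PowerSeries ℤ_[p] :=
      fun i => PowerSeries.mk fun d => (hdvd i d).choose with hw
    have hzw : ∀ i' e, coeff e (z i') = (p : ℤ_[p]) * coeff e (w i') := by
      intro i' e
      rw [hw]
      simp only [coeff_mk]
      exact (hdvd i' e).choose_spec
    have hzw' : ∀ i', z i' = (p : PowerSeries ℤ_[p]) * w i' := by
      intro i'
      ext e
      rw [← nsmul_eq_mul, map_nsmul, nsmul_eq_mul, ← hzw]
    have hw0 : ∑ i : Fin p, (1 + X) ^ (i : ℕ) * subst' ((1 + X) ^ p - 1) (w i) = 0 := by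
      have h2 : (p : PowerSeries ℤ_[p]) *
          ∑ i : Fin p, (1 + X) ^ (i : ℕ) * subst' ((1 + X) ^ p - 1) (w i) = 0 := by
        rw [Finset.mul_sum, ← h]
        apply Finset.sum_congr rfl
        intro i' _
        rw [hzw' i', subst'_natCast_mul]
        ring
      rcases mul_eq_zero.mp h2 with hc | hc
      · exfalso
        have h4 := congrArg (constantCoeff) hc
        rw [map_natCast, map_zero] at h4
        exact Nat.cast_ne_zero.mpr hp.out.ne_zero h4
      · exact hc
    rw [hzw i, pow_succ, mul_comm ((p : ℤ_[p]) ^ c) (p : ℤ_[p])]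
    exact mul_dvd_mul_left _ (ih w hw0 i d)

lemma padic_inj (z : Fin p → PowerSeries ℤ_[p])
    (h : ∑ i : Fin p, (1 + X) ^ (i : ℕ) * subst' ((1 + X) ^ p - 1) (z i) = 0) :
    ∀ i, z i = 0 := by
  intro i
  ext d
  rw [map_zero]
  exact padic_eq_zero_of_forall_pow_dvd _ fun c => pow_dvd_coeff c z h i d

end PadicInj

/-- **Lemma 3.2** (with `r = -m`): if `X^n (1+X)^m = ∑_{i<p} (1+X)^i xᵢ((1+X)^p - 1)`
in `ℤ_p[[X]]`, then the coefficient of `X^j` in `x₀ = ψ(X^n (1+X)^m)` equals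
`∑_{k ≡ -m mod p} (-1)^(n-k) C(n,k) C((k+m)/p, j)`. -/
theorem psi_coeff_formula (p : ℕ) [hp : Fact p.Prime] (n m : ℕ)
    (x : Fin p → PowerSeries ℤ_[p])
    (hx : X ^ n * (1 + X) ^ m =
      ∑ i : Fin p, (1 + X) ^ (i : ℕ) * PowerSeries.subst' ((1 + X) ^ p - 1) (x i))
    (j : ℕ) :
    coeff j (x 0) =
      ((∑ k ∈ (Finset.range (n + 1)).filter (fun k : ℕ => (k : ℤ) ≡ -(m : ℤ) [ZMOD (p : ℤ)]),
        (-1) ^ (n - k) * (n.choose k : ℤ) *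
          Ring.choose (((k : ℤ) + m) / (p : ℤ)) j : ℤ) : ℤ_[p]) := by

  classical
  have hppos := hp.out.pos
  set Y : PowerSeries ℤ_[p] := (1 + X) ^ p - 1 with hYdef
  have hY0 : constantCoeff Y = 0 := by
    rw [hYdef]
    simp
  set g : ℕ → Fin p := fun k => ⟨(k + m) % p, Nat.mod_lt _ hppos⟩ with hg
  set c : ℕ → ℤ := fun k => (-1) ^ (n - k) * (n.choose k : ℤ) with hcdef
  set y : Fin p → PowerSeries ℤ_[p] := fun i =>
    ∑ k ∈ (Finset.range (n + 1)).filter (fun k => g k = i),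
      ((c k : ℤ) : PowerSeries ℤ_[p]) * (1 + X) ^ ((k + m) / p) with hy
  have hterm : ∀ i : Fin p, (1 + X) ^ (i : ℕ) * PowerSeries.subst' Y (y i) =
      ∑ k ∈ (Finset.range (n + 1)).filter (fun k => g k = i),
        ((c k : ℤ) : PowerSeries ℤ_[p]) * (1 + X) ^ (k + m) := by
    intro i
    rw [hy]
    rw [subst'_sum, Finset.mul_sum]
    refine Finset.sum_congr rfl fun k hk => ?_
    rw [subst'_intCast_mul, subst'_one_add_X_pow hY0]
    have h1p : (1 : PowerSeries ℤ_[p]) + Y = (1 + X) ^ p := by rw [hYdef]; ring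
    rw [h1p, ← pow_mul]
    have hk' : (k + m) % p = (i : ℕ) := by
      have h6 := (Finset.mem_filter.mp hk).2
      simpa [hg, Fin.ext_iff] using h6
    have hdm := Nat.div_add_mod (k + m) p
    rw [hk'] at hdm
    conv_rhs => rw [show k + m = (i : ℕ) + p * ((k + m) / p) from by omega]
    rw [pow_add]
    ring
  have hysum : ∑ i : Fin p, (1 + X) ^ (i : ℕ) * PowerSeries.subst' Y (y i)
      = X ^ n * (1 + X) ^ m := by
    rw [Finset.sum_congr rfl fun i _ => hterm i]
    rw [Finset.sum_fiberwise]
    have hXn : (X : PowerSeries ℤ_[p]) ^ n = ∑ k ∈ Finset.range (n + 1),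
        (-1) ^ (k + n) * (1 + X) ^ k * 1 ^ (n - k) * (n.choose k : PowerSeries ℤ_[p]) := by
      rw [← sub_pow]
      norm_num
    rw [hXn, Finset.sum_mul]
    refine Finset.sum_congr rfl fun k hk => ?_
    have hkn : k ≤ n := by
      simp only [Finset.mem_range] at hk
      omega
    have hpar : ((-1 : PowerSeries ℤ_[p])) ^ (k + n) = (-1) ^ (n - k) := by
      rw [show k + n = (n - k) + 2 * k by omega, pow_add, pow_mul, neg_one_sq, one_pow, mul_one]
    have hc : ((c k : ℤ) : PowerSeries ℤ_[p])
        = (-1) ^ (n - k) * (n.choose k : PowerSeries ℤ_[p]) := by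
      rw [hcdef]
      push_cast
      ring
    rw [hc, ← hpar, pow_add]
    ring
  have hxy : ∀ i, x i = y i := by
    have hzero : ∑ i : Fin p, (1 + X) ^ (i : ℕ) * PowerSeries.subst' Y (x i - y i) = 0 := by
      have h7 : ∑ i : Fin p, (1 + X) ^ (i : ℕ) * PowerSeries.subst' Y (x i - y i)
          = (∑ i : Fin p, (1 + X) ^ (i : ℕ) * PowerSeries.subst' Y (x i))
            - ∑ i : Fin p, (1 + X) ^ (i : ℕ) * PowerSeries.subst' Y (y i) := by
        rw [← Finset.sum_sub_distrib]
        refine Finset.sum_congr rfl fun i _ => ?_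
        rw [subst'_sub]
        ring
      rw [h7, ← hx, hysum, sub_self]
    rw [hYdef] at hzero
    intro i
    have h8 := padic_inj (fun i => x i - y i) hzero i
    exact sub_eq_zero.mp h8
  rw [hxy 0]
  have hcoeff : coeff j (y 0) = ∑ k ∈ (Finset.range (n + 1)).filter (fun k => g k = 0),
      ((c k : ℤ) : ℤ_[p]) * (((k + m) / p).choose j : ℤ_[p]) := by
    rw [hy]
    rw [map_sum]
    refine Finset.sum_congr rfl fun k hk => ?_
    rw [← zsmul_eq_mul, map_zsmul, coeff_one_add_X_pow', zsmul_eq_mul]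
  rw [hcoeff]
  have hmem_iff : ∀ k : ℕ, (g k = 0) ↔ ((k : ℤ) ≡ -(m : ℤ) [ZMOD (p : ℤ)]) := by
    intro k
    have h1 : (g k = 0) ↔ (k + m) % p = 0 := by
      simp [hg, Fin.ext_iff]
    have h2 : ((k : ℤ) ≡ -(m : ℤ) [ZMOD (p : ℤ)]) ↔ ((p : ℤ) ∣ ((k : ℤ) + m)) := by
      rw [Int.modEq_iff_dvd, show -(m : ℤ) - k = -((k : ℤ) + m) from by ring, dvd_neg]
    have h3 : ((p : ℤ) ∣ ((k : ℤ) + m)) ↔ (p ∣ (k + m)) := by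
      rw [show (k : ℤ) + m = ((k + m : ℕ) : ℤ) from by push_cast; ring, Int.natCast_dvd_natCast]
    rw [h1, h2, h3, Nat.dvd_iff_mod_eq_zero]
  have hset : (Finset.range (n + 1)).filter (fun k => g k = 0) =
      (Finset.range (n + 1)).filter
        (fun k : ℕ => (k : ℤ) ≡ -(m : ℤ) [ZMOD (p : ℤ)]) := by
    apply Finset.filter_congr
    intro k _
    simp only [hmem_iff k]
  rw [hset, Int.cast_sum]
  refine Finset.sum_congr rfl fun k hk => ?_
  have hdvd : p ∣ (k + m) := by
    have h9 := (Finset.mem_filter.mp hk).2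
    rw [← hmem_iff k, hg] at h9
    simp only [Fin.ext_iff] at h9
    have : (k + m) % p = 0 := by simpa using h9
    exact Nat.dvd_of_mod_eq_zero this
  obtain ⟨t, ht⟩ := hdvd
  have h10 : (k + m) / p = t := by rw [ht, Nat.mul_div_cancel_left _ hppos]
  have hq : ((k : ℤ) + m) / (p : ℤ) = (t : ℤ) := by
    rw [show (k : ℤ) + m = (p : ℤ) * t from by exact_mod_cast congrArg (Nat.cast (R := ℤ)) ht]
    exact Int.mul_ediv_cancel_left _ (by exact_mod_cast hppos.ne')
  rw [hq, Ring.choose_natCast, h10, hcdef]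
  push_cast
  ring
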